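/- Let I = {i₁ < … < i_r} ⊆ {1,…,m} and J = {j₁ < … < j_s} ⊆ {1,…,n}. The ℂ-algebra homomorphism ψ : R_{m,n} → R_{r,s} determined by ψ(x_{i_a j_b}) = y_{ab} (for 1 ≤ a ≤ r, 1 ≤ b ≤ s, where y_{ab} are the variables of R_{r,s}) and ψ(x_{ij}) = 0 whenever i ∉ I or j ∉ J, is a Poisson homomorphism: ψ({f, g}_{m,n}) = {ψ(f), ψ(g)}_{r,s} for all f, g ∈ R_{m,n}. (Equivalently, the embedding of an r×s matrix as the (I,J)-submatrix of an m×n matrix, with all other entries zero, is a Poisson map between the matrix affine Poisson spaces.) -/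

import Mathlib

open MvPolynomial

/-- The quadratic Poisson bracket on the polynomial algebra of the matrix affine
Poisson space `M_{m,n}`. -/
noncomputable def pois {m n : ℕ} (f g : MvPolynomial (Fin m × Fin n) ℂ) :
    MvPolynomial (Fin m × Fin n) ℂ :=
  ∑ i : Fin m, ∑ k : Fin m, ∑ j : Fin n, ∑ l : Fin n,
    (((k : ℤ) - (i : ℤ)).sign + ((l : ℤ) - (j : ℤ)).sign) •
      (X (i, l) * X (k, j) * pderiv (i, j) f * pderiv (k, l) g)

/-- The minor `Δ_{I,J}` (equal to `0` by convention if `|I| ≠ |J|`). -/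
noncomputable def Delta {m n : ℕ} (I : Finset (Fin m)) (J : Finset (Fin n)) :
    MvPolynomial (Fin m × Fin n) ℂ :=
  if h : J.card = I.card then
    Matrix.det (Matrix.of fun a b : Fin I.card =>
      X ((I.orderIsoOfFin rfl a).1, (J.orderIsoOfFin h b).1))
  else 0

/-- Evaluation of a polynomial at a matrix. -/
noncomputable def evalM {m n : ℕ} (Y : Matrix (Fin m) (Fin n) ℂ)
    (f : MvPolynomial (Fin m × Fin n) ℂ) : ℂ :=
  eval (fun p => Y p.1 p.2) f

/-! Auxiliary lemmas. -/

/-- Chain rule for `pderiv` through a `ℂ`-algebra homomorphism of polynomial rings. -/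
lemma pderiv_algHom_chain {σ τ : Type*} [Fintype σ] [DecidableEq σ] [DecidableEq τ]
    (ψ : MvPolynomial σ ℂ →ₐ[ℂ] MvPolynomial τ ℂ) (q : τ) (f : MvPolynomial σ ℂ) :
    pderiv q (ψ f) = ∑ p : σ, ψ (pderiv p f) * pderiv q (ψ (X p)) := by
  induction f using MvPolynomial.induction_on with
  | C a => simp
  | add f g hf hg => simp [map_add, hf, hg, add_mul, Finset.sum_add_distrib]
  | mul_X f p hf =>
      have key : ∑ p' : σ, ψ f * ψ (pderiv p' (X p)) * pderiv q (ψ (X p'))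
          = ψ f * pderiv q (ψ (X p)) := by
        rw [Finset.sum_eq_single p]
        · simp
        · intro b _ hb; rw [pderiv_X_of_ne (Ne.symm hb)]; simp
        · simp
      rw [map_mul, pderiv_mul, hf, Finset.sum_mul]
      simp only [pderiv_mul, map_add, map_mul, add_mul, Finset.sum_add_distrib]
      rw [key]
      refine congrArg (· + _) ?_
      exact Finset.sum_congr rfl fun p' _ => by ring

lemma pderiv_psi {m n r s : ℕ} {I : Finset (Fin m)} {J : Finset (Fin n)}
    (hI : I.card = r) (hJ : J.card = s)
    (ψ : MvPolynomial (Fin m × Fin n) ℂ →ₐ[ℂ] MvPolynomial (Fin r × Fin s) ℂ)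
    (hψ : ∀ (i : Fin m) (j : Fin n),
      ψ (X (i, j)) =
        if h : i ∈ I ∧ j ∈ J then
          X ((I.orderIsoOfFin hI).symm ⟨i, h.1⟩, (J.orderIsoOfFin hJ).symm ⟨j, h.2⟩)
        else 0)
    (f : MvPolynomial (Fin m × Fin n) ℂ) (a : Fin r) (b : Fin s) :
    pderiv (a, b) (ψ f) =
      ψ (pderiv (((I.orderIsoOfFin hI) a : Fin m), ((J.orderIsoOfFin hJ) b : Fin n)) f) := by
  rw [pderiv_algHom_chain]
  rw [Finset.sum_eq_single (((I.orderIsoOfFin hI) a : Fin m), ((J.orderIsoOfFin hJ) b : Fin n))]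
  · rw [hψ, dif_pos ⟨(I.orderIsoOfFin hI a).2, (J.orderIsoOfFin hJ b).2⟩]
    simp only [Subtype.coe_eta, OrderIso.symm_apply_apply, pderiv_X_self, mul_one]
  · rintro ⟨i, j⟩ _ hne
    rw [hψ]
    split_ifs with h
    · have hne2 : ((((I.orderIsoOfFin hI).symm ⟨i, h.1⟩ : Fin r),
          ((J.orderIsoOfFin hJ).symm ⟨j, h.2⟩ : Fin s)) : Fin r × Fin s) ≠ (a, b) := by
        intro hq
        apply hne
        have hq1 := (Prod.ext_iff.mp hq).1
        have hq2 := (Prod.ext_iff.mp hq).2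
        have h1 : (⟨i, h.1⟩ : I) = (I.orderIsoOfFin hI) a :=
          (OrderIso.symm_apply_eq _).mp hq1
        have h2 : (⟨j, h.2⟩ : J) = (J.orderIsoOfFin hJ) b :=
          (OrderIso.symm_apply_eq _).mp hq2
        exact Prod.ext (congrArg Subtype.val h1) (congrArg Subtype.val h2)
      rw [pderiv_X_of_ne hne2, mul_zero]
    · simp
  · simp

lemma sign_comp_strictMono {r m : ℕ} {u : Fin r → Fin m} (hu : StrictMono u) (i k : Fin r) :
    (((u k : ℕ) : ℤ) - ((u i : ℕ) : ℤ)).sign = (((k : ℕ) : ℤ) - ((i : ℕ) : ℤ)).sign := by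
  rcases lt_trichotomy i k with h | h | h
  · have h1 : (i : ℕ) < (k : ℕ) := h
    have h2 : (u i : ℕ) < (u k : ℕ) := hu h
    rw [Int.sign_eq_one_iff_pos.mpr (by omega), Int.sign_eq_one_iff_pos.mpr (by omega)]
  · subst h; simp
  · have h1 : (k : ℕ) < (i : ℕ) := h
    have h2 : (u k : ℕ) < (u i : ℕ) := hu h
    rw [Int.sign_eq_neg_one_iff_neg.mpr (by omega), Int.sign_eq_neg_one_iff_neg.mpr (by omega)]

lemma sum_restrict_orderIso {M : Type*} [AddCommMonoid M] {m r : ℕ}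
    (I : Finset (Fin m)) (hI : I.card = r) (G : Fin m → M) (h0 : ∀ i ∉ I, G i = 0) :
    ∑ i, G i = ∑ a : Fin r, G ((I.orderIsoOfFin hI) a) := by
  rw [← Finset.sum_subset (Finset.subset_univ I) (fun i _ hi => h0 i hi)]
  rw [← Finset.sum_coe_sort I G]
  exact (Equiv.sum_comp (I.orderIsoOfFin hI).toEquiv (fun x => G x)).symm

/-- **Embedding as a submatrix (other entries zero) is Poisson.** The ℂ-algebra
homomorphism `ψ : R_{m,n} → R_{r,s}` with `ψ(x_{i_a j_b}) = y_{ab}` and `ψ(x_{ij}) = 0`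
for `i ∉ I` or `j ∉ J` intertwines the quadratic Poisson brackets. -/
theorem submatrix_embedding_poisson (m n : ℕ) (hm : 0 < m) (hn : 0 < n) (r s : ℕ)
    (I : Finset (Fin m)) (J : Finset (Fin n))
    (hI : I.card = r) (hJ : J.card = s)
    (ψ : MvPolynomial (Fin m × Fin n) ℂ →ₐ[ℂ] MvPolynomial (Fin r × Fin s) ℂ)
    (hψ : ∀ (i : Fin m) (j : Fin n),
      ψ (X (i, j)) =
        if h : i ∈ I ∧ j ∈ J then
          X ((I.orderIsoOfFin hI).symm ⟨i, h.1⟩, (J.orderIsoOfFin hJ).symm ⟨j, h.2⟩)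
        else 0)
    (f g : MvPolynomial (Fin m × Fin n) ℂ) :
    ψ (pois f g) = pois (ψ f) (ψ g) := by
  classical
  have hz : ∀ (i : Fin m) (l : Fin n), i ∉ I ∨ l ∉ J → ψ (X (i, l)) = 0 := by
    intro i l h
    rw [hψ]
    exact dif_neg (fun hc => h.elim (fun h1 => h1 hc.1) (fun h2 => h2 hc.2))
  have hMI : StrictMono (fun a : Fin r => ((I.orderIsoOfFin hI) a : Fin m)) := by
    intro a b hab
    exact (I.orderIsoOfFin hI).strictMono hab
  have hMJ : StrictMono (fun b : Fin s => ((J.orderIsoOfFin hJ) b : Fin n)) := by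
    intro a b hab
    exact (J.orderIsoOfFin hJ).strictMono hab
  simp only [pois, map_sum, map_zsmul, map_mul]
  rw [sum_restrict_orderIso I hI _ (by
    intro i hi
    apply Finset.sum_eq_zero; intro k _
    apply Finset.sum_eq_zero; intro j _
    apply Finset.sum_eq_zero; intro l _
    rw [hz i l (Or.inl hi)]; simp)]
  refine Finset.sum_congr rfl fun a _ => ?_
  rw [sum_restrict_orderIso I hI _ (by
    intro k hk
    apply Finset.sum_eq_zero; intro j _
    apply Finset.sum_eq_zero; intro l _
    rw [hz k j (Or.inl hk)]; simp)]
  refine Finset.sum_congr rfl fun a' _ => ?_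
  rw [sum_restrict_orderIso J hJ _ (by
    intro j hj
    apply Finset.sum_eq_zero; intro l _
    rw [hz _ j (Or.inr hj)]; simp)]
  refine Finset.sum_congr rfl fun b _ => ?_
  rw [sum_restrict_orderIso J hJ _ (by
    intro l hl
    rw [hz _ l (Or.inr hl)]; simp)]
  refine Finset.sum_congr rfl fun b' _ => ?_
  have hx1 : ψ (X (((I.orderIsoOfFin hI) a : Fin m), ((J.orderIsoOfFin hJ) b' : Fin n)))
      = X ((a, b') : Fin r × Fin s) := by
    rw [hψ, dif_pos ⟨(I.orderIsoOfFin hI a).2, (J.orderIsoOfFin hJ b').2⟩]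
    simp only [Subtype.coe_eta, OrderIso.symm_apply_apply]
  have hx2 : ψ (X (((I.orderIsoOfFin hI) a' : Fin m), ((J.orderIsoOfFin hJ) b : Fin n)))
      = X ((a', b) : Fin r × Fin s) := by
    rw [hψ, dif_pos ⟨(I.orderIsoOfFin hI a').2, (J.orderIsoOfFin hJ b).2⟩]
    simp only [Subtype.coe_eta, OrderIso.symm_apply_apply]
  rw [hx1, hx2, pderiv_psi hI hJ ψ hψ f a b, pderiv_psi hI hJ ψ hψ g a' b',
    sign_comp_strictMono hMI a a', sign_comp_strictMono hMJ b b']
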